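/- arXiv:1510.00495 — 2 statements merged into one kernel-verified Lean document; each statement's English description precedes it below -/
import Mathlib

section
/- Let φ: ℕ → ℝ⁺ be monotonically increasing, γ = limsup_{n→∞} φ(n)/log n, δ = liminf_{n→∞} φ(n)/log n, and 0 ≤ α ≤ β ≤ ∞. If αγ < 1 (with α, γ finite) or βδ < 1 (with β, δ finite), then the set E^φ_{α,β} = {x ∈ Σ : liminf_n (log R_n(x))/φ(n) = α, limsup_n (log R_n(x))/φ(n) = β} has Hausdorff dimension 0. -/
open Filter Set Metric
open scoped ENNReal Topology

namespace RecurrenceZeroOne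

/-- The first return time of `x` to its initial `n`-cylinder:
`R_n(x) = inf {j ≥ 1 : x_{j+1} ⋯ x_{j+n} = x_1 ⋯ x_n}`, equal to `⊤` if no such `j` exists. -/
noncomputable def R (m n : ℕ) (x : ℕ → Fin m) : ℕ∞ :=
  sInf {j : ℕ∞ | ∃ k : ℕ, j = (k : ℕ∞) ∧ 1 ≤ k ∧ ∀ i < n, x (k + i) = x i}

/-- `log` of an extended natural number, valued in `ℝ≥0∞`. -/
noncomputable def elog (a : ℕ∞) : ℝ≥0∞ :=
  if a = ⊤ then ⊤ else ENNReal.ofReal (Real.log a.toNat)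

/-- The ratio `log R_n(x) / φ(n)` as an element of `ℝ≥0∞`. -/
noncomputable def ratio (m : ℕ) (φ : ℕ → ℝ) (x : ℕ → Fin m) (n : ℕ) : ℝ≥0∞ :=
  elog (R m n x) / ENNReal.ofReal (φ n)

open Classical in
/-- The standard distance `d(x,y) = m^{-inf{k ≥ 0 : x_k ≠ y_k}}` on the full shift. -/
noncomputable def shiftDist (m : ℕ) (x y : ℕ → Fin m) : ℝ :=
  if x = y then 0 else (m : ℝ) ^ (-(PiNat.firstDiff x y : ℤ))

/-- The full shift with the metric `d(x,y) = m^{-inf{k ≥ 0 : x_k ≠ y_k}}`. -/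
noncomputable instance shiftMetric (m : ℕ) [hm : Fact (2 ≤ m)] :
    MetricSpace (ℕ → Fin m) where
  dist := shiftDist m
  dist_self x := if_pos rfl
  dist_comm x y := by
    show shiftDist m x y = shiftDist m y x
    unfold shiftDist
    rcases eq_or_ne x y with rfl | h
    · simp
    · rw [if_neg h, if_neg (Ne.symm h), PiNat.firstDiff_comm]
  dist_triangle x y z := by
    show shiftDist m x z ≤ shiftDist m x y + shiftDist m y z
    unfold shiftDist
    have hm1 : (1 : ℝ) ≤ (m : ℝ) := by
      have := hm.out; exact_mod_cast le_trans (by norm_num) this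
    have hpos : ∀ k : ℕ, (0 : ℝ) < (m : ℝ) ^ (-(k : ℤ)) := fun k =>
      zpow_pos (lt_of_lt_of_le one_pos hm1) _
    have hanti : ∀ a b : ℕ, a ≤ b → (m : ℝ) ^ (-(b : ℤ)) ≤ (m : ℝ) ^ (-(a : ℤ)) := by
      intro a b hab
      exact zpow_le_zpow_right₀ hm1 (by exact_mod_cast neg_le_neg (by exact_mod_cast hab))
    rcases eq_or_ne x z with rfl | hxz
    · rw [if_pos rfl]
      positivity
    rcases eq_or_ne x y with rfl | hxy
    · rw [if_pos rfl, zero_add]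
    rcases eq_or_ne y z with rfl | hyz
    · rw [if_pos rfl, add_zero]
    rw [if_neg hxz, if_neg hxy, if_neg hyz]
    have hmin := PiNat.min_firstDiff_le x y z hxz
    rcases le_total (PiNat.firstDiff x y) (PiNat.firstDiff y z) with h | h
    · have : PiNat.firstDiff x y ≤ PiNat.firstDiff x z := by
        simpa [min_eq_left h] using hmin
      calc (m : ℝ) ^ (-(PiNat.firstDiff x z : ℤ))
          ≤ (m : ℝ) ^ (-(PiNat.firstDiff x y : ℤ)) := hanti _ _ this
        _ ≤ _ := le_add_of_nonneg_right (hpos _).le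
    · have : PiNat.firstDiff y z ≤ PiNat.firstDiff x z := by
        simpa [min_eq_right h] using hmin
      calc (m : ℝ) ^ (-(PiNat.firstDiff x z : ℤ))
          ≤ (m : ℝ) ^ (-(PiNat.firstDiff y z : ℤ)) := hanti _ _ this
        _ ≤ _ := le_add_of_nonneg_left (hpos _).le
  eq_of_dist_eq_zero := by
    intro x y h
    by_contra hxy
    have h2 : shiftDist m x y = 0 := h
    unfold shiftDist at h2
    rw [if_neg hxy] at h2
    have hm1 : (0 : ℝ) < (m : ℝ) := by
      have := (Fact.out : 2 ≤ m); positivity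
    exact absurd h2 (ne_of_gt (zpow_pos hm1 _))

/-- The set `E^φ_{α,β}`. -/
noncomputable def ESet (m : ℕ) (φ : ℕ → ℝ) (α β : ℝ≥0∞) : Set (ℕ → Fin m) :=
  {x | Filter.liminf (fun n => ratio m φ x n) Filter.atTop = α ∧
       Filter.limsup (fun n => ratio m φ x n) Filter.atTop = β}

/-- The Cantor-type set `A({n_i},{ℓ_i})`. -/
def ASet (m : ℕ) (nseq ℓseq : ℕ → ℕ) : Set (ℕ → Fin m) :=
  {x | ∀ᶠ n in Filter.atTop, ∀ i, nseq i < n → n ≤ nseq (i + 1) →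
        R m n x = (ℓseq (i + 1) : ℕ∞)}

/-- The shift map `σ`. -/
def shift (m : ℕ) (x : ℕ → Fin m) : ℕ → Fin m := fun i => x (i + 1)



noncomputable def Kc (c : ℝ) (n : ℕ) : ℕ := ⌈(n:ℝ) ^ c⌉₊

def F (m : ℕ) (c : ℝ) : Set (ℕ → Fin m) :=
  {x | ∃ᶠ n in atTop, ∃ k, 1 ≤ k ∧ k ≤ Kc c n ∧ ∀ i < n, x (k + i) = x i}

lemma R_spec {m n : ℕ} {x : ℕ → Fin m} (h : R m n x ≠ ⊤) :
    ∃ k : ℕ, R m n x = (k : ℕ∞) ∧ 1 ≤ k ∧ ∀ i < n, x (k + i) = x i := by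
  have hS : {j : ℕ∞ | ∃ k : ℕ, j = (k : ℕ∞) ∧ 1 ≤ k ∧ ∀ i < n, x (k + i) = x i}.Nonempty := by
    by_contra hne
    rw [Set.not_nonempty_iff_eq_empty] at hne
    exact h (by rw [R, hne, sInf_empty])
  obtain ⟨j, k0, rfl, hk0, hp0⟩ := hS
  have hT : {k : ℕ | 1 ≤ k ∧ ∀ i < n, x (k + i) = x i}.Nonempty := ⟨k0, hk0, hp0⟩
  have hmem := Nat.sInf_mem hT
  refine ⟨_, ?_, hmem.1, hmem.2⟩
  refine le_antisymm (sInf_le ⟨_, rfl, hmem.1, hmem.2⟩) (le_sInf ?_)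
  rintro j ⟨k, rfl, hk1, hkp⟩
  have := Nat.sInf_le (show k ∈ {k : ℕ | 1 ≤ k ∧ ∀ i < n, x (k + i) = x i} from ⟨hk1, hkp⟩)
  exact_mod_cast this

lemma mem_F {m : ℕ} {x : ℕ → Fin m} {c : ℝ} (hc : 0 < c)
    (h : ∃ᶠ n in atTop, 3 ≤ n ∧ elog (R m n x) ≤ ENNReal.ofReal (c * Real.log n)) :
    x ∈ F m c := by
  refine h.mono ?_
  rintro n ⟨hn3, hle⟩
  have hn1 : (1:ℝ) < (n:ℝ) := by exact_mod_cast lt_of_lt_of_le (by norm_num) hn3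
  have hlogn : 0 < Real.log n := Real.log_pos hn1
  have hR : R m n x ≠ ⊤ := by
    intro htop
    rw [elog, if_pos htop, top_le_iff] at hle
    exact ENNReal.ofReal_ne_top hle
  obtain ⟨k, hk, hk1, hkp⟩ := R_spec hR
  have hlogk : Real.log k ≤ c * Real.log n := by
    rw [hk] at hle
    have he : elog (k : ℕ∞) = ENNReal.ofReal (Real.log k) := by
      rw [elog, if_neg (by exact_mod_cast WithTop.coe_ne_top), ENat.toNat_coe]
    rw [he, ENNReal.ofReal_le_ofReal_iff (by positivity)] at hle
    exact hle
  have hkc : (k:ℝ) ≤ (n:ℝ) ^ c := by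
    have hkpos : (0:ℝ) < k := by exact_mod_cast hk1
    calc (k:ℝ) = Real.exp (Real.log k) := (Real.exp_log hkpos).symm
      _ ≤ Real.exp (Real.log n * c) := Real.exp_le_exp.mpr (by linarith)
      _ = (n:ℝ) ^ c := (Real.rpow_def_of_pos (by linarith) c).symm
  refine ⟨k, hk1, ?_, hkp⟩
  calc k = ⌈((k:ℕ):ℝ)⌉₊ := (Nat.ceil_natCast k).symm
    _ ≤ Kc c n := Nat.ceil_le_ceil hkc

lemma exists_c {A B : ℝ≥0∞} (hAB : A * B < 1) :
    ∃ ε c : ℝ, 0 < ε ∧ 0 < c ∧ c < 1 ∧ (A.toReal + ε) * (B.toReal + ε) = c := by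
  set a := A.toReal with ha'
  set b := B.toReal with hb'
  have ha : 0 ≤ a := ENNReal.toReal_nonneg
  have hb : 0 ≤ b := ENNReal.toReal_nonneg
  have hab : a * b < 1 := by
    have h1 : A * B ≠ ⊤ := ne_top_of_lt hAB
    have := (ENNReal.toReal_lt_toReal h1 (by simp)).mpr hAB
    rwa [ENNReal.toReal_mul, ENNReal.toReal_one] at this
  have hd : (0:ℝ) < a + b + 2 := by linarith
  set ε := (1 - a*b)/(a+b+2) with hε'
  have hε : 0 < ε := div_pos (by linarith) hd
  have hεeq : ε * (a+b+2) = 1 - a*b := div_mul_cancel₀ _ hd.ne'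
  have hε2 : ε ≤ 1/2 := by
    rw [hε', div_le_iff₀ hd]
    nlinarith
  refine ⟨ε, _, hε, ?_, ?_, rfl⟩
  · positivity
  · nlinarith

lemma step (m : ℕ) (φ : ℕ → ℝ) (hpos : ∀ n, 0 < φ n) {x : ℕ → Fin m} {A B : ℝ≥0∞}
    (hA : A ≠ ⊤) (hB : B ≠ ⊤) {ε c : ℝ} (hε : 0 < ε)
    (hceq : (A.toReal + ε) * (B.toReal + ε) = c) {n : ℕ} (hn3 : 3 ≤ n)
    (h1 : ratio m φ x n < A + ENNReal.ofReal ε)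
    (h2 : ENNReal.ofReal (φ n / Real.log n) < B + ENNReal.ofReal ε) :
    elog (R m n x) ≤ ENNReal.ofReal (c * Real.log n) := by
  have hn1 : (1:ℝ) < (n:ℝ) := by exact_mod_cast lt_of_lt_of_le (by norm_num) hn3
  have hlogn : 0 < Real.log n := Real.log_pos hn1
  have haε : 0 ≤ A.toReal + ε := by positivity
  have hφn : φ n ≤ (B.toReal + ε) * Real.log n := by
    have hBe : B + ENNReal.ofReal ε ≠ ⊤ := by
      simp [hB, ENNReal.add_ne_top, ENNReal.ofReal_ne_top]
    have h3 := (ENNReal.ofReal_lt_iff_lt_toReal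
      (div_nonneg (hpos n).le hlogn.le) hBe).mp h2
    rw [ENNReal.toReal_add hB ENNReal.ofReal_ne_top, ENNReal.toReal_ofReal hε.le,
      div_lt_iff₀ hlogn] at h3
    exact h3.le
  have hd : elog (R m n x) = ratio m φ x n * ENNReal.ofReal (φ n) :=
    (ENNReal.div_mul_cancel (ENNReal.ofReal_pos.mpr (hpos n)).ne' ENNReal.ofReal_ne_top).symm
  rw [hd]
  calc ratio m φ x n * ENNReal.ofReal (φ n)
      ≤ (A + ENNReal.ofReal ε) * ENNReal.ofReal (φ n) := mul_le_mul_left h1.le _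
    _ = ENNReal.ofReal ((A.toReal + ε) * φ n) := by
        have hAe : A + ENNReal.ofReal ε = ENNReal.ofReal (A.toReal + ε) := by
          rw [ENNReal.ofReal_add ENNReal.toReal_nonneg hε.le, ENNReal.ofReal_toReal hA]
        rw [hAe, ← ENNReal.ofReal_mul haε]
    _ ≤ ENNReal.ofReal (c * Real.log n) := by
        refine ENNReal.ofReal_le_ofReal ?_
        calc (A.toReal + ε) * φ n ≤ (A.toReal + ε) * ((B.toReal + ε) * Real.log n) :=
              mul_le_mul_of_nonneg_left hφn haε
          _ = c * Real.log n := by rw [← hceq]; ring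

lemma per_of_ret {m : ℕ} {x : ℕ → Fin m} {n k : ℕ} (hk : 0 < k)
    (h : ∀ i < n, x (k + i) = x i) : ∀ i < n, x i = x (i % k) := by
  intro i
  induction i using Nat.strong_induction_on with
  | _ i IH =>
    intro hi
    rcases lt_or_ge i k with hik | hik
    · rw [Nat.mod_eq_of_lt hik]
    · have h1 : i - k < n := lt_of_le_of_lt (Nat.sub_le _ _) hi
      have h2 : i - k < i := Nat.sub_lt (lt_of_lt_of_le hk hik) hk
      have h3 : x i = x (i - k) := by
        conv_lhs => rw [show i = k + (i - k) by omega]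
        exact h _ h1
      rw [h3, IH _ h2 h1, Nat.mod_eq_sub_mod hik]

lemma tsum_shift (f : ℕ → ℝ≥0∞) (N : ℕ) :
    (∑' n, (if N ≤ n then f n else 0)) = ∑' i, f (i + N) := by
  have hinj : Function.Injective (fun i : ℕ => i + N) := add_left_injective N
  have hsupp : Function.support (fun n => if N ≤ n then f n else 0) ⊆
      Set.range (fun i : ℕ => i + N) := by
    intro n hn
    rcases le_or_gt N n with h | h
    · exact ⟨n - N, show n - N + N = n by omega⟩
    · simp only [Function.mem_support, if_neg (by omega : ¬ N ≤ n)] at hn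
      exact absurd rfl hn
  calc (∑' n, (if N ≤ n then f n else 0))
      = ∑' i, (if N ≤ i + N then f (i + N) else 0) := (hinj.tsum_eq hsupp).symm
    _ = ∑' i, f (i + N) := tsum_congr fun i => if_pos (by omega)

set_option maxHeartbeats 2000000 in
lemma dimH_F (m : ℕ) [hm : Fact (2 ≤ m)] {c : ℝ} (hc0 : 0 < c) (hc1 : c < 1) :
    dimH (F m c) = 0 := by
  letI tX : TopologicalSpace (ℕ → Fin m) := UniformSpace.toTopologicalSpace
  letI ms : MeasurableSpace (ℕ → Fin m) := @borel _ tX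
  haveI bs : @BorelSpace (ℕ → Fin m) tX ms := @BorelSpace.mk _ tX ms rfl
  suffices hmeas : ∀ d : ℝ, 0 < d →
      @MeasureTheory.Measure.hausdorffMeasure _ _ ms bs d (F m c) = 0 by
    refine le_antisymm ?_ (zero_le)
    refine ENNReal.le_of_forall_pos_le_add fun ε hε _ => ?_
    rw [zero_add]
    refine @dimH_le_of_hausdorffMeasure_ne_top _ _ ms bs _ ε ?_
    rw [hmeas ε (by exact_mod_cast hε)]
    exact ENNReal.zero_ne_top
  intro d hd0
  have hm2 : 2 ≤ m := hm.out
  set M : ℝ≥0∞ := (m : ℝ≥0∞) with hM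
  have hM1 : (1:ℝ≥0∞) < M := by rw [hM]; exact_mod_cast (by omega : 1 < m)
  have hM0 : M ≠ 0 := (lt_trans zero_lt_one hM1).ne'
  have hMt : M ≠ ⊤ := ENNReal.natCast_ne_top m
  set K := Kc c with hK
  -- diameter of a length-n cylinder
  have hcyl : ∀ (n : ℕ) (w : ℕ → Fin m),
      EMetric.diam {y : ℕ → Fin m | ∀ i < n, y i = w i} ≤ M ^ (-(n:ℝ)) := by
    intro n w
    refine EMetric.diam_le fun y hy z hz => ?_
    rcases eq_or_ne y z with rfl | hyz
    · simp
    have hfd : n ≤ PiNat.firstDiff y z := by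
      by_contra hlt
      push_neg at hlt
      exact PiNat.apply_firstDiff_ne hyz (by rw [hy _ hlt, hz _ hlt])
    have hdist : dist y z = (m:ℝ) ^ (-(PiNat.firstDiff y z : ℤ)) := by
      show shiftDist m y z = _
      rw [shiftDist, if_neg hyz]
    rw [edist_dist, hdist]
    have hmr : (1:ℝ) ≤ (m:ℝ) := by exact_mod_cast (by omega : 1 ≤ m)
    have h0m : (0:ℝ) < (m:ℝ) := by positivity
    have hle : (m:ℝ) ^ (-(PiNat.firstDiff y z : ℤ)) ≤ (m:ℝ) ^ (-(n:ℤ)) :=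
      zpow_le_zpow_right₀ hmr (by exact_mod_cast neg_le_neg (by exact_mod_cast hfd))
    calc ENNReal.ofReal ((m:ℝ) ^ (-(PiNat.firstDiff y z : ℤ)))
        ≤ ENNReal.ofReal ((m:ℝ) ^ (-(n:ℤ))) := ENNReal.ofReal_le_ofReal hle
      _ = M ^ (-(n:ℝ)) := by
          rw [hM, ← ENNReal.ofReal_natCast m, ENNReal.ofReal_rpow_of_pos h0m]
          congr 1
          rw [← Real.rpow_intCast (m:ℝ) (-(n:ℤ))]
          norm_num
  -- the covering family
  let t : ℕ → (ℕ × Σ k : ℕ, (Fin k → Fin m)) → Set (ℕ → Fin m) := fun N p =>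
    if h : N ≤ p.1 ∧ 1 ≤ p.2.1 ∧ p.2.1 ≤ K p.1 then
      {y | ∀ i < p.1, y i = p.2.2 ⟨i % p.2.1, Nat.mod_lt i h.2.1⟩} else ∅
  have hdiam_t : ∀ N p, EMetric.diam (t N p) ≤ M ^ (-(N:ℝ)) := by
    intro N p
    by_cases h : N ≤ p.1 ∧ 1 ≤ p.2.1 ∧ p.2.1 ≤ K p.1
    · calc EMetric.diam (t N p) ≤ M ^ (-(p.1:ℝ)) := by
            rw [show t N p = _ from dif_pos h]; exact hcyl p.1 _
        _ ≤ M ^ (-(N:ℝ)) :=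
            ENNReal.rpow_le_rpow_of_exponent_le hM1.le
              (neg_le_neg (by exact_mod_cast h.1))
    · rw [show t N p = ∅ from dif_neg h]; simp [EMetric.diam]
  have hcov : ∀ N : ℕ, F m c ⊆ ⋃ p, t N p := by
    intro N x hx
    obtain ⟨n, ⟨k, hk1, hk2, hper⟩, hNn⟩ :=
      (Frequently.and_eventually hx (eventually_ge_atTop N)).exists
    refine Set.mem_iUnion.mpr ⟨(n, ⟨k, fun j => x j⟩), ?_⟩
    have h : N ≤ n ∧ 1 ≤ k ∧ k ≤ K n := ⟨hNn, hk1, hk2⟩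
    rw [show t N (n, ⟨k, fun j : Fin k => x j⟩) = _ from dif_pos h]
    intro i hi
    simpa using per_of_ret hk1 hper i hi
  have hr : Tendsto (fun N : ℕ => M ^ (-(N:ℝ))) atTop (𝓝 0) := by
    have heq : ∀ N : ℕ, M ^ (-(N:ℝ)) = (M⁻¹) ^ N := by
      intro N
      rw [ENNReal.rpow_neg, ENNReal.rpow_natCast, ← ENNReal.inv_pow]
    simp only [heq]
    exact ENNReal.tendsto_pow_atTop_nhds_zero_of_lt_one (ENNReal.inv_lt_one.mpr hM1)
  have hμ := @MeasureTheory.Measure.hausdorffMeasure_le_liminf_tsum _ _ ms bs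
    ℕ (fun _ => ℕ × Σ k : ℕ, (Fin k → Fin m)) (fun _ => inferInstance) d (F m c) _
    (fun N : ℕ => M ^ (-(N:ℝ))) hr t
    (Eventually.of_forall fun N => hdiam_t N) (Eventually.of_forall hcov)
  set b : ℕ → ℝ≥0∞ := fun n => ((K n + 1 : ℕ) : ℝ≥0∞) * M ^ (K n) * M ^ (-(n:ℝ) * d)
    with hb
  -- pointwise bound on the summands
  have hpb : ∀ N (p : ℕ × Σ k : ℕ, (Fin k → Fin m)),
      EMetric.diam (t N p) ^ d ≤
        if N ≤ p.1 ∧ 1 ≤ p.2.1 ∧ p.2.1 ≤ K p.1 then M ^ (-(p.1:ℝ) * d) else 0 := by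
    intro N p
    by_cases h : N ≤ p.1 ∧ 1 ≤ p.2.1 ∧ p.2.1 ≤ K p.1
    · rw [if_pos h]
      calc EMetric.diam (t N p) ^ d ≤ (M ^ (-(p.1:ℝ))) ^ d :=
            ENNReal.rpow_le_rpow (by
              rw [show t N p = _ from dif_pos h]; exact hcyl p.1 _) hd0.le
        _ = M ^ (-(p.1:ℝ) * d) := (ENNReal.rpow_mul M _ d).symm
    · rw [if_neg h, show t N p = ∅ from dif_neg h]
      simp [ENNReal.zero_rpow_of_pos hd0, EMetric.diam]
  have hsum : ∀ N, (∑' p : ℕ × Σ k : ℕ, (Fin k → Fin m), EMetric.diam (t N p) ^ d)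
      ≤ ∑' n, (if N ≤ n then b n else 0) := by
    intro N
    calc ∑' p : ℕ × Σ k : ℕ, (Fin k → Fin m), EMetric.diam (t N p) ^ d
        ≤ ∑' p : ℕ × Σ k : ℕ, (Fin k → Fin m),
            (if N ≤ p.1 ∧ 1 ≤ p.2.1 ∧ p.2.1 ≤ K p.1 then M ^ (-(p.1:ℝ) * d) else 0) :=
          ENNReal.tsum_le_tsum (hpb N)
      _ = ∑' (n : ℕ) (q : Σ k : ℕ, (Fin k → Fin m)),
            (if N ≤ n ∧ 1 ≤ q.1 ∧ q.1 ≤ K n then M ^ (-(n:ℝ) * d) else 0) :=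
          ENNReal.tsum_prod'
      _ = ∑' (n : ℕ) (k : ℕ) (_w : Fin k → Fin m),
            (if N ≤ n ∧ 1 ≤ k ∧ k ≤ K n then M ^ (-(n:ℝ) * d) else 0) := by
          exact tsum_congr fun n => ENNReal.tsum_sigma' _
      _ ≤ ∑' n, (if N ≤ n then b n else 0) := by
          refine ENNReal.tsum_le_tsum fun n => ?_
          by_cases hNn : N ≤ n
          · rw [if_pos hNn]
            have hinner : ∀ k : ℕ,
                (∑' _w : Fin k → Fin m,
                  (if N ≤ n ∧ 1 ≤ k ∧ k ≤ K n then M ^ (-(n:ℝ) * d) else 0))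
                ≤ if k ≤ K n then ((m ^ K n : ℕ) : ℝ≥0∞) * M ^ (-(n:ℝ) * d) else 0 := by
              intro k
              by_cases hk : 1 ≤ k ∧ k ≤ K n
              · rw [if_pos hk.2, tsum_fintype]
                simp only [if_pos (⟨hNn, hk⟩ : N ≤ n ∧ 1 ≤ k ∧ k ≤ K n)]
                rw [Finset.sum_const, Finset.card_univ, Fintype.card_fun,
                  Fintype.card_fin, Fintype.card_fin, nsmul_eq_mul]
                refine mul_le_mul_left ?_ _
                exact_mod_cast Nat.cast_le.mpr (Nat.pow_le_pow_right (by omega) hk.2)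
              · have hz : (if N ≤ n ∧ 1 ≤ k ∧ k ≤ K n then M ^ (-(n:ℝ) * d) else 0) = 0 :=
                  if_neg (by tauto)
                rw [tsum_congr (fun _w : Fin k → Fin m => hz), tsum_zero]
                exact zero_le
            calc (∑' (k : ℕ) (_w : Fin k → Fin m),
                  (if N ≤ n ∧ 1 ≤ k ∧ k ≤ K n then M ^ (-(n:ℝ) * d) else 0))
                ≤ ∑' k : ℕ, (if k ≤ K n then ((m ^ K n : ℕ) : ℝ≥0∞) * M ^ (-(n:ℝ) * d) else 0) :=
                  ENNReal.tsum_le_tsum hinner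
              _ ≤ b n := by
                  rw [tsum_eq_sum (s := Finset.range (K n + 1))
                    (fun k hk => if_neg (by simp only [Finset.mem_range] at hk; omega))]
                  calc ∑ k ∈ Finset.range (K n + 1),
                        (if k ≤ K n then ((m ^ K n : ℕ) : ℝ≥0∞) * M ^ (-(n:ℝ) * d) else 0)
                      ≤ ∑ _k ∈ Finset.range (K n + 1),
                          ((m ^ K n : ℕ) : ℝ≥0∞) * M ^ (-(n:ℝ) * d) :=
                        Finset.sum_le_sum (fun k _ => by split <;> simp)
                    _ = b n := by
                        rw [Finset.sum_const, Finset.card_range, nsmul_eq_mul, hb]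
                        push_cast
                        ring
          · rw [if_neg hNn]
            have hz : ∀ k : ℕ,
                (if N ≤ n ∧ 1 ≤ k ∧ k ≤ K n then M ^ (-(n:ℝ) * d) else 0) = 0 :=
              fun k => if_neg (by tauto)
            rw [tsum_congr (fun k : ℕ => tsum_congr (fun _w : Fin k → Fin m => hz k))]
            simp
  -- summability of b
  set r : ℝ≥0∞ := M ^ (-(d/2)) with hrdef
  have hr1 : r < 1 := ENNReal.rpow_lt_one_of_one_lt_of_neg hM1 (by linarith)
  have hbne : ∀ n, b n ≠ ⊤ := by
    intro n
    rw [hb]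
    refine ENNReal.mul_ne_top (ENNReal.mul_ne_top (ENNReal.natCast_ne_top _)
      (ENNReal.pow_ne_top hMt)) ?_
    rw [neg_mul, ENNReal.rpow_neg]
    exact ENNReal.inv_ne_top.mpr (ENNReal.rpow_pos (pos_of_gt hM1) hMt).ne'
  have hev : ∀ᶠ n : ℕ in atTop, b n ≤ r ^ n := by
    have htend : Tendsto (fun n : ℕ => (n:ℝ) ^ (c-1)) atTop (𝓝 0) := by
      have h1 : Tendsto (fun x : ℝ => x ^ (-(1-c))) atTop (𝓝 0) :=
        tendsto_rpow_neg_atTop (by linarith)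
      have h2 := h1.comp tendsto_natCast_atTop_atTop (α := ℕ)
      simpa [Function.comp_def, show -(1-c) = c - 1 by ring] using h2
    have hev1 : ∀ᶠ n : ℕ in atTop, (n:ℝ) ^ (c-1) < d/8 :=
      htend.eventually_lt_const (by positivity)
    have hev2 : ∀ᶠ n : ℕ in atTop, (24/d : ℝ) ≤ n :=
      tendsto_natCast_atTop_atTop.eventually_ge_atTop _
    filter_upwards [hev1, hev2, eventually_ge_atTop 1] with n h1 h2 h3
    have hn0 : (0:ℝ) < n := by exact_mod_cast h3
    have hnc : (n:ℝ) ^ c ≤ (d/8) * n := by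
      have : (n:ℝ) ^ c = (n:ℝ) ^ (c-1) * n := by
        rw [show c = (c-1) + 1 by ring, Real.rpow_add hn0, Real.rpow_one]
        ring_nf
      rw [this]
      have := mul_le_mul_of_nonneg_right h1.le hn0.le
      linarith
    have hKn : (K n : ℝ) ≤ (n:ℝ) ^ c + 1 := by
      rw [hK]
      exact (Nat.ceil_lt_add_one (Real.rpow_nonneg hn0.le c)).le
    have hexp : (2 * K n + 1 : ℝ) ≤ (d/2) * n := by
      have hd' : d ≠ 0 := hd0.ne'
      have h6 : (6:ℝ) ≤ (d/4) * n := by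
        have := mul_le_mul_of_nonneg_left h2 (by positivity : (0:ℝ) ≤ d/4)
        have heq : (d/4) * (24/d) = 6 := by field_simp; ring
        linarith
      linarith
    -- b n ≤ M ^ ((2*K n + 1 : ℝ) - n*d) ≤ M ^ (-(d/2) * n) = r ^ n
    have hb1 : b n ≤ M ^ ((2 * K n + 1 : ℝ)) * M ^ (-(n:ℝ) * d) := by
      rw [hb]
      refine mul_le_mul_left ?_ _
      have hc1' : ((K n + 1 : ℕ) : ℝ≥0∞) ≤ M ^ (K n + 1) := by
        rw [hM]
        exact_mod_cast Nat.cast_le.mpr (Nat.lt_pow_self (n := K n + 1) (by omega : 1 < m)).le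
      calc ((K n + 1 : ℕ) : ℝ≥0∞) * M ^ (K n) ≤ M ^ (K n + 1) * M ^ (K n) :=
            mul_le_mul_left hc1' _
        _ = M ^ (2 * K n + 1) := by rw [← pow_add]; ring_nf
        _ = M ^ ((2 * K n + 1 : ℕ) : ℝ) := (ENNReal.rpow_natCast M _).symm
        _ = M ^ ((2 * K n + 1 : ℝ)) := by push_cast; ring_nf
    have hb2 : M ^ ((2 * K n + 1 : ℝ)) * M ^ (-(n:ℝ) * d) = M ^ ((2 * K n + 1 : ℝ) - n * d) := by
      rw [← ENNReal.rpow_add _ _ hM0 hMt]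
      ring_nf
    have hb3 : M ^ ((2 * K n + 1 : ℝ) - n * d) ≤ M ^ (-(d/2) * (n:ℝ)) := by
      refine ENNReal.rpow_le_rpow_of_exponent_le hM1.le ?_
      nlinarith
    have hb4 : M ^ (-(d/2) * (n:ℝ)) = r ^ n := by
      rw [hrdef, ← ENNReal.rpow_natCast (M ^ (-(d/2))) n, ← ENNReal.rpow_mul]
    calc b n ≤ M ^ ((2 * K n + 1 : ℝ)) * M ^ (-(n:ℝ) * d) := hb1
      _ = M ^ ((2 * K n + 1 : ℝ) - n * d) := hb2
      _ ≤ M ^ (-(d/2) * (n:ℝ)) := hb3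
      _ = r ^ n := hb4
  obtain ⟨N₀, hN₀⟩ := eventually_atTop.mp hev
  have hgeo : (∑' k : ℕ, r ^ k) ≠ ⊤ := by
    rw [ENNReal.tsum_geometric]
    refine ENNReal.inv_ne_top.mpr ?_
    intro h0
    exact absurd (tsub_eq_zero_iff_le.mp h0) (not_le.mpr hr1)
  have hbsum : (∑' n, b n) ≠ ⊤ := by
    have hsplit : ∀ n, b n = (if n < N₀ then b n else 0) + (if N₀ ≤ n then b n else 0) := by
      intro n
      rcases lt_or_ge n N₀ with h | h
      · rw [if_pos h, if_neg (by omega), add_zero]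
      · rw [if_neg (by omega), if_pos h, zero_add]
    rw [tsum_congr hsplit, ENNReal.tsum_add]
    refine ENNReal.add_ne_top.mpr ⟨?_, ?_⟩
    · rw [tsum_eq_sum (s := Finset.range N₀)
        (fun n hn => if_neg (by simpa using hn))]
      refine (ENNReal.sum_lt_top.mpr fun i _ => ?_).ne
      split
      · exact (hbne i).lt_top
      · exact ENNReal.zero_lt_top
    · have hle : ∀ n, (if N₀ ≤ n then b n else 0) ≤ r ^ n := by
        intro n
        split
        · exact hN₀ n ‹_›
        · exact zero_le
      exact ((ENNReal.tsum_le_tsum hle).trans_lt hgeo.lt_top).ne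
  have hT0 : Tendsto (fun N => ∑' n, (if N ≤ n then b n else 0)) atTop (𝓝 0) := by
    simp only [tsum_shift b]
    exact ENNReal.tendsto_sum_nat_add b hbsum
  -- conclude
  refine le_antisymm ?_ (zero_le)
  refine hμ.trans ?_
  have hS0 : Tendsto (fun N => ∑' p : ℕ × Σ k : ℕ, (Fin k → Fin m),
      EMetric.diam (t N p) ^ d) atTop (𝓝 0) :=
    tendsto_of_tendsto_of_tendsto_of_le_of_le tendsto_const_nhds hT0
      (fun N => zero_le) hsum
  exact hS0.liminf_eq.le



/-- Zero-dimensional part of the main theorem: if `αγ < 1` (with `α, γ` finite) or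
`βδ < 1` (with `β, δ` finite), then `dim_H E^φ_{α,β} = 0`. -/
theorem dimH_ESet_eq_zero (m : ℕ) [Fact (2 ≤ m)] (φ : ℕ → ℝ)
    (hpos : ∀ n, 0 < φ n) (hmono : Monotone φ) (α β : ℝ≥0∞) (hαβ : α ≤ β)
    (h : (α ≠ ⊤ ∧
          Filter.limsup (fun n => ENNReal.ofReal (φ n / Real.log n)) Filter.atTop ≠ ⊤ ∧
          α * Filter.limsup (fun n => ENNReal.ofReal (φ n / Real.log n)) Filter.atTop < 1) ∨
         (β ≠ ⊤ ∧
          Filter.liminf (fun n => ENNReal.ofReal (φ n / Real.log n)) Filter.atTop ≠ ⊤ ∧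
          β * Filter.liminf (fun n => ENNReal.ofReal (φ n / Real.log n)) Filter.atTop < 1)) :
    dimH (ESet m φ α β) = 0 := by
  rcases h with ⟨hA, hG, hAG⟩ | ⟨hB, hD, hBD⟩
  · obtain ⟨ε, c, hε, hc0, hc1, hceq⟩ := exists_c hAG
    have hsub : ESet m φ α β ⊆ F m c := by
      rintro x ⟨hlinf, _hlsup⟩
      apply mem_F hc0
      have hfr : ∃ᶠ n in atTop, ratio m φ x n < α + ENNReal.ofReal ε := by
        refine frequently_lt_of_liminf_lt (by isBoundedDefault) ?_
        rw [hlinf]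
        exact ENNReal.lt_add_right hA (ENNReal.ofReal_pos.mpr hε).ne'
      have hev : ∀ᶠ n in atTop, ENNReal.ofReal (φ n / Real.log n) <
          (Filter.limsup (fun n => ENNReal.ofReal (φ n / Real.log n)) Filter.atTop)
            + ENNReal.ofReal ε :=
        eventually_lt_of_limsup_lt
          (ENNReal.lt_add_right hG (ENNReal.ofReal_pos.mpr hε).ne') (by isBoundedDefault)
      refine (hfr.and_eventually (hev.and (eventually_ge_atTop 3))).mono ?_
      rintro n ⟨h1, h2, h3⟩
      exact ⟨h3, step m φ hpos hA hG hε hceq h3 h1 h2⟩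
    refine le_antisymm ?_ (zero_le)
    calc dimH (ESet m φ α β) ≤ dimH (F m c) := dimH_mono hsub
      _ = 0 := dimH_F m hc0 hc1
  · obtain ⟨ε, c, hε, hc0, hc1, hceq⟩ := exists_c hBD
    have hsub : ESet m φ α β ⊆ F m c := by
      rintro x ⟨_hlinf, hlsup⟩
      apply mem_F hc0
      have hfr : ∃ᶠ n in atTop, ENNReal.ofReal (φ n / Real.log n) <
          (Filter.liminf (fun n => ENNReal.ofReal (φ n / Real.log n)) Filter.atTop)
            + ENNReal.ofReal ε := by
        exact frequently_lt_of_liminf_lt (by isBoundedDefault)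
          (ENNReal.lt_add_right hD (ENNReal.ofReal_pos.mpr hε).ne')
      have hev : ∀ᶠ n in atTop, ratio m φ x n < β + ENNReal.ofReal ε := by
        refine eventually_lt_of_limsup_lt ?_ (by isBoundedDefault)
        rw [hlsup]
        exact ENNReal.lt_add_right hB (ENNReal.ofReal_pos.mpr hε).ne'
      refine (hfr.and_eventually (hev.and (eventually_ge_atTop 3))).mono ?_
      rintro n ⟨h1, h2, h3⟩
      exact ⟨h3, step m φ hpos hB hD hε hceq h3 h2 h1⟩
    refine le_antisymm ?_ (zero_le)
    calc dimH (ESet m φ α β) ≤ dimH (F m c) := dimH_mono hsub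
      _ = 0 := dimH_F m hc0 hc1


end RecurrenceZeroOne
end

section
/- Suppose x ∈ Σ satisfies: there exist strictly increasing sequences {n_i}, {ℓ_i} of natural numbers with R_n(x) = ℓ_i for all large n with n_{i-1} < n ≤ n_i, where ℓ_i = ⌈n_i^A log n_i⌉, lim_i (log n_{i+1})/(log n_i) = B/A for some 1 ≤ A ≤ B < ∞, limsup_i φ(n_i)/log n_i = γ and liminf_i φ(n_i+1)/log(n_i+1) = δ with 0 < δ ≤ γ < ∞. Then liminf_n (log R_n(x))/φ(n) = A/γ and limsup_n (log R_n(x))/φ(n) = B/δ. -/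
open Filter Set Metric
open scoped ENNReal Topology

namespace RecurrenceZeroOne

private lemma bdd_of_limsup_ne_zero {u : ℕ → ℝ}
    (h : Filter.limsup u Filter.atTop ≠ 0) :
    Filter.IsBoundedUnder (· ≤ ·) Filter.atTop u := by
  by_contra hb
  apply h
  rw [Filter.limsup_eq]
  have : {a | ∀ᶠ n in atTop, u n ≤ a} = ∅ := by
    rw [Set.eq_empty_iff_forall_notMem]
    intro a ha
    exact hb ⟨a, by simpa [Filter.eventually_map] using ha⟩
  rw [this, Real.sInf_empty]

private lemma cobdd_of_liminf_ne_zero {v : ℕ → ℝ}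
    (h : Filter.liminf v Filter.atTop ≠ 0) :
    Filter.IsCoboundedUnder (· ≥ ·) Filter.atTop v := by
  by_contra hb
  apply h
  rw [Filter.liminf_eq]
  apply Real.sSup_of_not_bddAbove
  rintro ⟨b, hbb⟩
  exact hb ⟨b, fun a ha => hbb (by simpa [Filter.eventually_map] using ha)⟩

private lemma exists_s_lt {C D : ℝ} (ε : ℝ) (hC : 0 < C) (hD : 0 < D) (hε : 0 < ε) :
    ∃ s : ℝ, 0 < s ∧ s < D ∧ (C + s) / (D - s) < C / D + ε := by
  have hcont : ContinuousAt (fun s : ℝ => (C + s) / (D - s)) 0 := by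
    apply ContinuousAt.div (by fun_prop) (by fun_prop)
    simpa using hD.ne'
  have h0 : (fun s : ℝ => (C + s) / (D - s)) 0 < C / D + ε := by
    simpa using hε
  have h1 : ∀ᶠ s in 𝓝 (0 : ℝ), (C + s) / (D - s) < C / D + ε :=
    hcont.eventually (eventually_lt_nhds h0)
  have h2 : ∀ᶠ s in 𝓝 (0 : ℝ), s < D := eventually_lt_nhds hD
  have h3 : ∀ᶠ s in 𝓝[>] (0 : ℝ), ((C + s) / (D - s) < C / D + ε ∧ s < D) ∧ 0 < s :=
    (((h1.and h2).filter_mono nhdsWithin_le_nhds).and self_mem_nhdsWithin)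
  obtain ⟨s, ⟨hs1, hs2⟩, hs3⟩ := h3.exists
  exact ⟨s, hs3, hs2, hs1⟩

private lemma exists_s_gt {C D : ℝ} (ε : ℝ) (hC : 0 < C) (hD : 0 < D) (hε : 0 < ε) :
    ∃ s : ℝ, 0 < s ∧ s < C ∧ C / D - ε < (C - s) / (D + s) := by
  have hcont : ContinuousAt (fun s : ℝ => (C - s) / (D + s)) 0 := by
    apply ContinuousAt.div (by fun_prop) (by fun_prop)
    simpa using hD.ne'
  have h0 : C / D - ε < (fun s : ℝ => (C - s) / (D + s)) 0 := by
    simpa using hε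
  have h1 : ∀ᶠ s in 𝓝 (0 : ℝ), C / D - ε < (C - s) / (D + s) :=
    hcont.eventually (eventually_gt_nhds h0)
  have h2 : ∀ᶠ s in 𝓝 (0 : ℝ), s < C := eventually_lt_nhds hC
  have h3 : ∀ᶠ s in 𝓝[>] (0 : ℝ), (_ ∧ s < C) ∧ 0 < s :=
    (((h1.and h2).filter_mono nhdsWithin_le_nhds).and self_mem_nhdsWithin)
  obtain ⟨s, ⟨hs1, hs2⟩, hs3⟩ := h3.exists
  exact ⟨s, hs3, hs2, hs1⟩

private lemma freq_shift {P : ℕ → Prop} (h : ∃ᶠ i in Filter.atTop, P i) :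
    ∃ᶠ i in Filter.atTop, P (i + 1) := by
  rw [Filter.frequently_atTop] at h ⊢
  intro N
  obtain ⟨i, hi, hPi⟩ := h (N + 1)
  exact ⟨i - 1, by omega, by rwa [Nat.sub_add_cancel (by omega)]⟩



private lemma tendsto_logx_div : Tendsto (fun x : ℝ => Real.log x / x) atTop (𝓝 0) := by
  simpa using Real.tendsto_pow_log_div_mul_add_atTop 1 0 1 one_ne_zero

private lemma tendsto_p (p : ℕ → ℕ) (hp : StrictMono p) :
    Tendsto (fun i => (p i : ℝ)) atTop atTop :=
  tendsto_natCast_atTop_atTop.comp (tendsto_atTop_mono (fun i => hp.le_apply) tendsto_id)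

private lemma tendsto_logp (p : ℕ → ℕ) (hp : StrictMono p) :
    Tendsto (fun i => Real.log (p i)) atTop atTop :=
  Real.tendsto_log_atTop.comp (tendsto_p p hp)

private lemma log2_pos : (0:ℝ) < Real.log 2 := Real.log_pos (by norm_num)

private lemma tendsto_log_ceil {A : ℝ} (hA : 1 ≤ A) (p : ℕ → ℕ) (hp : StrictMono p) :
    Tendsto (fun i => Real.log (⌈(p i : ℝ) ^ A * Real.log (p i)⌉₊) / Real.log (p i))
      atTop (𝓝 A) := by
  have hlogP := tendsto_logp p hp
  have hlo : Tendsto (fun i => A + Real.log (Real.log (p i)) / Real.log (p i))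
      atTop (𝓝 (A + 0)) :=
    tendsto_const_nhds.add (tendsto_logx_div.comp hlogP)
  have hhi : Tendsto
      (fun i => A + Real.log (Real.log (p i)) / Real.log (p i) + Real.log 2 / Real.log (p i))
      atTop (𝓝 (A + 0 + 0)) :=
    hlo.add (tendsto_const_nhds.div_atTop hlogP)
  have hev : ∀ᶠ i in atTop, (2:ℝ) ≤ (p i : ℝ) := (tendsto_p p hp).eventually_ge_atTop 2
  norm_num at hlo hhi
  have key : ∀ i, (2:ℝ) ≤ (p i : ℝ) →
      (A + Real.log (Real.log (p i)) / Real.log (p i)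
        ≤ Real.log (⌈(p i : ℝ) ^ A * Real.log (p i)⌉₊) / Real.log (p i)) ∧
      (Real.log (⌈(p i : ℝ) ^ A * Real.log (p i)⌉₊) / Real.log (p i)
        ≤ A + Real.log (Real.log (p i)) / Real.log (p i) + Real.log 2 / Real.log (p i)) := by
    intro i hi2
    set q : ℝ := (p i : ℝ) with hq
    have hlPpos : 0 < Real.log q := Real.log_pos (by linarith)
    have hqA : q ≤ q ^ A := by
      nth_rewrite 1 [← Real.rpow_one q]
      exact Real.rpow_le_rpow_of_exponent_le (by linarith) hA
    have hqApos : (0:ℝ) < q ^ A := Real.rpow_pos_of_pos (by linarith) A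
    have hl2 : Real.log 2 ≤ Real.log q := Real.log_le_log (by norm_num) hi2
    have ht1 : (1:ℝ) ≤ q ^ A * Real.log q := by
      have h2 : (2:ℝ) ≤ q ^ A := le_trans hi2 hqA
      have : (2:ℝ) * Real.log 2 ≤ q ^ A * Real.log q :=
        mul_le_mul h2 hl2 log2_pos.le (by linarith)
      nlinarith [Real.log_two_gt_d9]
    have htpos : (0:ℝ) < q ^ A * Real.log q := by linarith
    have hceil : q ^ A * Real.log q ≤ (⌈q ^ A * Real.log q⌉₊ : ℝ) := Nat.le_ceil _
    have hceil2 : (⌈q ^ A * Real.log q⌉₊ : ℝ) ≤ 2 * (q ^ A * Real.log q) := by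
      have := Nat.ceil_lt_add_one htpos.le (R := ℝ) (a := q ^ A * Real.log q)
      linarith
    have hlogt : Real.log (q ^ A * Real.log q) = A * Real.log q + Real.log (Real.log q) := by
      rw [Real.log_mul (ne_of_gt hqApos) (ne_of_gt hlPpos), Real.log_rpow (by linarith)]
    constructor
    · have h1 : A * Real.log q + Real.log (Real.log q)
          ≤ Real.log (⌈q ^ A * Real.log q⌉₊ : ℝ) := by
        rw [← hlogt]; exact Real.log_le_log htpos hceil
      rw [show A + Real.log (Real.log q) / Real.log q
          = (A * Real.log q + Real.log (Real.log q)) / Real.log q by field_simp]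
      gcongr
    · have h2 : Real.log (⌈q ^ A * Real.log q⌉₊ : ℝ)
          ≤ A * Real.log q + Real.log (Real.log q) + Real.log 2 := by
        calc Real.log (⌈q ^ A * Real.log q⌉₊ : ℝ)
            ≤ Real.log (2 * (q ^ A * Real.log q)) :=
              Real.log_le_log (by positivity) hceil2
          _ = Real.log 2 + (A * Real.log q + Real.log (Real.log q)) := by
              rw [Real.log_mul (by norm_num) (ne_of_gt htpos), hlogt]
          _ = _ := by ring
      rw [show A + Real.log (Real.log q) / Real.log q + Real.log 2 / Real.log q
          = (A * Real.log q + Real.log (Real.log q) + Real.log 2) / Real.log q by field_simp]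
      gcongr
  exact tendsto_of_tendsto_of_tendsto_of_le_of_le' hlo hhi
    (hev.mono fun i hi => (key i hi).1) (hev.mono fun i hi => (key i hi).2)

private lemma tendsto_log_succ_div (p : ℕ → ℕ) (hp : StrictMono p) :
    Tendsto (fun i => Real.log ((p i + 1 : ℕ)) / Real.log (p i)) atTop (𝓝 1) := by
  have hlogP := tendsto_logp p hp
  have hev : ∀ᶠ i in atTop, (2:ℝ) ≤ (p i : ℝ) := (tendsto_p p hp).eventually_ge_atTop 2
  have hhi : Tendsto (fun i => 1 + Real.log 2 / Real.log (p i)) atTop (𝓝 (1 + 0)) :=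
    tendsto_const_nhds.add (tendsto_const_nhds.div_atTop hlogP)
  norm_num at hhi
  apply tendsto_of_tendsto_of_tendsto_of_le_of_le' (g := fun _ => (1:ℝ)) tendsto_const_nhds hhi
  · filter_upwards [hev] with i hi2
    have hlPpos : 0 < Real.log (p i : ℝ) := Real.log_pos (by linarith)
    have : Real.log (p i : ℝ) ≤ Real.log ((p i + 1 : ℕ) : ℝ) := by
      apply Real.log_le_log (by linarith)
      push_cast; linarith
    rw [le_div_iff₀ hlPpos, one_mul]
    exact this
  · filter_upwards [hev] with i hi2
    have hlPpos : 0 < Real.log (p i : ℝ) := Real.log_pos (by linarith)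
    have h1 : Real.log ((p i + 1 : ℕ) : ℝ) ≤ Real.log 2 + Real.log (p i : ℝ) := by
      rw [← Real.log_mul (by norm_num) (by linarith)]
      apply Real.log_le_log (by positivity)
      push_cast; linarith
    have expand : (1 + Real.log 2 / Real.log (p i:ℝ)) * Real.log (p i:ℝ)
        = Real.log (p i:ℝ) + Real.log 2 := by field_simp
    rw [div_le_iff₀ hlPpos, expand]
    linarith


private lemma exists_s_lt' {C D : ℝ} (ε : ℝ) (hD : 0 < D) (hε : 0 < ε) :
    ∃ s : ℝ, 0 < s ∧ s < D ∧ (C + s) / (D - s) < C / D + ε := by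
  have hcont : ContinuousAt (fun s : ℝ => (C + s) / (D - s)) 0 := by
    apply ContinuousAt.div (by fun_prop) (by fun_prop)
    simpa using hD.ne'
  have h0 : (fun s : ℝ => (C + s) / (D - s)) 0 < C / D + ε := by simpa using hε
  have h1 : ∀ᶠ s in 𝓝 (0 : ℝ), (C + s) / (D - s) < C / D + ε :=
    hcont.eventually (eventually_lt_nhds h0)
  have h2 : ∀ᶠ s in 𝓝 (0 : ℝ), s < D := eventually_lt_nhds hD
  have h3 : ∀ᶠ s in 𝓝[>] (0:ℝ), ((C + s) / (D - s) < C / D + ε ∧ s < D) ∧ 0 < s :=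
    (((h1.and h2).filter_mono nhdsWithin_le_nhds).and
      (eventually_mem_nhdsWithin.mono fun s hs => hs))
  obtain ⟨s, ⟨hs1, hs2⟩, hs3⟩ := h3.exists
  exact ⟨s, hs3, hs2, hs1⟩

private lemma exists_s_gt' {C D : ℝ} (ε : ℝ) (hC : 0 < C) (hD : 0 < D) (hε : 0 < ε) :
    ∃ s : ℝ, 0 < s ∧ s < C ∧ C / D - ε < (C - s) / (D + s) := by
  have hcont : ContinuousAt (fun s : ℝ => (C - s) / (D + s)) 0 := by
    apply ContinuousAt.div (by fun_prop) (by fun_prop)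
    simpa using hD.ne'
  have h0 : C / D - ε < (fun s : ℝ => (C - s) / (D + s)) 0 := by simpa using hε
  have h1 : ∀ᶠ s in 𝓝 (0 : ℝ), C / D - ε < (C - s) / (D + s) :=
    hcont.eventually (eventually_gt_nhds h0)
  have h2 : ∀ᶠ s in 𝓝 (0 : ℝ), s < C := eventually_lt_nhds hC
  have h3 : ∀ᶠ s in 𝓝[>] (0:ℝ), (C / D - ε < (C - s) / (D + s) ∧ s < C) ∧ 0 < s :=
    (((h1.and h2).filter_mono nhdsWithin_le_nhds).and
      (eventually_mem_nhdsWithin.mono fun s hs => hs))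
  obtain ⟨s, ⟨hs1, hs2⟩, hs3⟩ := h3.exists
  exact ⟨s, hs3, hs2, hs1⟩

private lemma ev_div_lt {c v : ℕ → ℝ} {B δ : ℝ} (hB : 0 < B) (hδ : 0 < δ)
    (hc : Tendsto c atTop (𝓝 B)) (hv : Filter.liminf v Filter.atTop = δ)
    (hvb : Filter.IsBoundedUnder (· ≥ ·) Filter.atTop v)
    {ε : ℝ} (hε : 0 < ε) :
    ∀ᶠ i in atTop, c i / v i < B / δ + ε := by
  obtain ⟨s, hs0, hsδ, hslt⟩ := exists_s_lt' (C := B) ε hδ hε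
  have h1 : ∀ᶠ i in atTop, c i < B + s :=
    hc.eventually (eventually_lt_nhds (by linarith))
  have h2 : ∀ᶠ i in atTop, δ - s < v i :=
    eventually_lt_of_lt_liminf (by rw [hv]; linarith) hvb
  filter_upwards [h1, h2] with i hci hvi
  have hds : 0 < δ - s := by linarith
  have hvip : 0 < v i := hds.trans hvi
  have : c i / v i < (B + s) / (δ - s) := by
    rw [div_lt_div_iff₀ hvip hds]
    nlinarith
  linarith

private lemma freq_div_gt {c v : ℕ → ℝ} {B δ : ℝ} (hB : 0 < B) (hδ : 0 < δ)
    (hc : Tendsto c atTop (𝓝 B)) (hv : Filter.liminf v Filter.atTop = δ)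
    (hvcb : Filter.IsCoboundedUnder (· ≥ ·) Filter.atTop v)
    (hvpos : ∀ i, 0 < v i)
    {ε : ℝ} (hε : 0 < ε) :
    ∃ᶠ i in atTop, B / δ - ε < c i / v i := by
  obtain ⟨s, hs0, hsB, hslt⟩ := exists_s_gt' (D := δ) ε hB hδ hε
  have h1 : ∀ᶠ i in atTop, B - s < c i :=
    hc.eventually (eventually_gt_nhds (by linarith))
  have h2 : ∃ᶠ i in atTop, v i < δ + s :=
    frequently_lt_of_liminf_lt hvcb (by rw [hv]; linarith)
  apply (h2.and_eventually h1).mono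
  rintro i ⟨hv2, hc2⟩
  have hvip := hvpos i
  have : (B - s) / (δ + s) < c i / v i := by
    rw [div_lt_div_iff₀ (by linarith) hvip]
    nlinarith
  linarith

private lemma ev_div_gt {a u : ℕ → ℝ} {A γ : ℝ} (hA : 0 < A) (hγ : 0 < γ)
    (ha : Tendsto a atTop (𝓝 A)) (hu : Filter.limsup u Filter.atTop = γ)
    (hub : Filter.IsBoundedUnder (· ≤ ·) Filter.atTop u)
    (hupos : ∀ᶠ i in atTop, 0 < u i)
    {ε : ℝ} (hε : 0 < ε) :
    ∀ᶠ i in atTop, A / γ - ε < a i / u i := by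
  obtain ⟨s, hs0, hsA, hslt⟩ := exists_s_gt' (D := γ) ε hA hγ hε
  have h1 : ∀ᶠ i in atTop, A - s < a i :=
    ha.eventually (eventually_gt_nhds (by linarith))
  have h2 : ∀ᶠ i in atTop, u i < γ + s :=
    eventually_lt_of_limsup_lt (by rw [hu]; linarith) hub
  filter_upwards [h1, h2, hupos] with i hai hui huip
  have : (A - s) / (γ + s) < a i / u i := by
    rw [div_lt_div_iff₀ (by linarith) huip]
    nlinarith
  linarith

private lemma freq_div_lt {a u : ℕ → ℝ} {A γ : ℝ} (hA : 0 < A) (hγ : 0 < γ)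
    (ha : Tendsto a atTop (𝓝 A)) (hu : Filter.limsup u Filter.atTop = γ)
    (hucb : Filter.IsCoboundedUnder (· ≤ ·) Filter.atTop u)
    {ε : ℝ} (hε : 0 < ε) :
    ∃ᶠ i in atTop, a i / u i < A / γ + ε := by
  obtain ⟨s, hs0, hsγ, hslt⟩ := exists_s_lt' (C := A) ε hγ hε
  have h1 : ∀ᶠ i in atTop, a i < A + s :=
    ha.eventually (eventually_lt_nhds (by linarith))
  have h2 : ∃ᶠ i in atTop, γ - s < u i :=
    frequently_lt_of_lt_limsup hucb (by rw [hu]; linarith)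
  apply (h2.and_eventually h1).mono
  rintro i ⟨hu2, ha2⟩
  have hgs : 0 < γ - s := by linarith
  have huip : 0 < u i := hgs.trans hu2
  have : a i / u i < (A + s) / (γ - s) := by
    rw [div_lt_div_iff₀ huip hgs]
    nlinarith
  linarith



private lemma div_div_div_same (a b c : ℝ) (hc : c ≠ 0) : a / c / (b / c) = a / b := by
  rcases eq_or_ne b 0 with rfl | hb
  · simp
  · field_simp

/-- Computation of the recurrence exponents for points of the Cantor-type set with
`ℓ_i = ⌈n_i^A log n_i⌉`: the liminf is `A/γ` and the limsup is `B/δ`. -/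
theorem recurrence_exponents_of_special_blocks (m : ℕ) (hm : 2 ≤ m) (φ : ℕ → ℝ)
    (hpos : ∀ n, 0 < φ n) (hmono : Monotone φ)
    (A B γ δ : ℝ) (hA : 1 ≤ A) (hAB : A ≤ B) (hδ : 0 < δ) (hδγ : δ ≤ γ)
    (nseq ℓseq : ℕ → ℕ) (hns : StrictMono nseq) (hls : StrictMono ℓseq)
    (hn1 : ∀ i, 1 ≤ nseq i)
    (hℓ : ∀ i, ℓseq i = ⌈(nseq i : ℝ) ^ A * Real.log (nseq i)⌉₊)
    (hBA : Filter.Tendsto (fun i => Real.log (nseq (i + 1)) / Real.log (nseq i))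
      Filter.atTop (nhds (B / A)))
    (hγ : Filter.limsup (fun i => φ (nseq i) / Real.log (nseq i)) Filter.atTop = γ)
    (hδ' : Filter.liminf
      (fun i => φ (nseq i + 1) / Real.log ((nseq i + 1 : ℕ))) Filter.atTop = δ)
    (x : ℕ → Fin m)
    (hx : ∀ᶠ n in Filter.atTop, ∀ i, nseq i < n → n ≤ nseq (i + 1) →
      R m n x = (ℓseq (i + 1) : ℕ∞)) :
    Filter.liminf (fun n => ratio m φ x n) Filter.atTop = ENNReal.ofReal (A / γ) ∧
    Filter.limsup (fun n => ratio m φ x n) Filter.atTop = ENNReal.ofReal (B / δ) := by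
  have hγpos : 0 < γ := lt_of_lt_of_le hδ hδγ
  have hApos : 0 < A := lt_of_lt_of_le one_pos hA
  have hBpos : 0 < B := lt_of_lt_of_le hApos hAB
  have hADpos : 0 < A / γ := div_pos hApos hγpos
  have hBDpos : 0 < B / δ := div_pos hBpos hδ
  -- positivity of logs
  have hlv : ∀ i, 0 < Real.log ((nseq i + 1 : ℕ) : ℝ) := by
    intro i
    apply Real.log_pos
    have h := hn1 i
    push_cast
    exact_mod_cast Nat.lt_succ_of_le h
  have hlu : ∀ᶠ i in atTop, 0 < Real.log ((nseq i : ℕ) : ℝ) :=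
    (tendsto_logp nseq hns).eventually_gt_atTop 0
  -- a' = log ℓ_i / log n_i → A
  have ha' : Tendsto (fun i => Real.log (ℓseq i) / Real.log (nseq i)) atTop (𝓝 A) := by
    apply (tendsto_log_ceil hA nseq hns).congr
    intro i
    rw [← hℓ i]
  -- c → B
  have hc : Tendsto (fun i => Real.log (ℓseq (i + 1)) / Real.log ((nseq i + 1 : ℕ)))
      atTop (𝓝 B) := by
    have ha : Tendsto (fun i => Real.log (ℓseq (i + 1)) / Real.log (nseq (i + 1)))
        atTop (𝓝 A) := ha'.comp (tendsto_add_atTop_nat 1)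
    have h3 : Tendsto (fun i => (Real.log ((nseq i + 1 : ℕ)) / Real.log (nseq i))⁻¹)
        atTop (𝓝 1) := by
      have := (tendsto_log_succ_div nseq hns).inv₀ one_ne_zero
      simpa using this
    have hprod := (ha.mul hBA).mul h3
    have hval : A * (B / A) * (1 : ℝ) = B := by field_simp
    rw [hval] at hprod
    apply hprod.congr'
    filter_upwards [hlu, (tendsto_add_atTop_nat 1).eventually hlu] with i h1 h2
    have h3' := hlv i
    have e1 : Real.log ((nseq i : ℕ) : ℝ) ≠ 0 := ne_of_gt h1
    have e2 : Real.log ((nseq (i + 1) : ℕ) : ℝ) ≠ 0 := ne_of_gt h2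
    have e3 : Real.log ((nseq i + 1 : ℕ) : ℝ) ≠ 0 := ne_of_gt h3'
    field_simp
  -- boundedness facts
  have hub : Filter.IsBoundedUnder (· ≤ ·) Filter.atTop
      (fun i => φ (nseq i) / Real.log (nseq i)) :=
    bdd_of_limsup_ne_zero (by rw [hγ]; exact hγpos.ne')
  have hupos : ∀ᶠ i in atTop, 0 < φ (nseq i) / Real.log (nseq i) :=
    hlu.mono fun i h => div_pos (hpos _) h
  have hub2 : Filter.IsBoundedUnder (· ≥ ·) Filter.atTop
      (fun i => φ (nseq i) / Real.log (nseq i)) :=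
    isBoundedUnder_of_eventually_ge (hupos.mono fun i h => h.le)
  have hucb : Filter.IsCoboundedUnder (· ≤ ·) Filter.atTop
      (fun i => φ (nseq i) / Real.log (nseq i)) := hub2.isCoboundedUnder_le
  have hvpos : ∀ i, 0 < φ (nseq i + 1) / Real.log ((nseq i + 1 : ℕ)) :=
    fun i => div_pos (hpos _) (hlv i)
  have hvb : Filter.IsBoundedUnder (· ≥ ·) Filter.atTop
      (fun i => φ (nseq i + 1) / Real.log ((nseq i + 1 : ℕ))) :=
    isBoundedUnder_of_eventually_ge (Eventually.of_forall fun i => (hvpos i).le)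
  have hvcb : Filter.IsCoboundedUnder (· ≥ ·) Filter.atTop
      (fun i => φ (nseq i + 1) / Real.log ((nseq i + 1 : ℕ))) :=
    cobdd_of_liminf_ne_zero (by rw [hδ']; exact hδ.ne')
  -- pointwise identities
  have heq2 : ∀ i, Real.log (ℓseq (i + 1)) / Real.log ((nseq i + 1 : ℕ))
      / (φ (nseq i + 1) / Real.log ((nseq i + 1 : ℕ)))
      = Real.log (ℓseq (i + 1)) / φ (nseq i + 1) := by
    intro i
    exact div_div_div_same _ _ _ (ne_of_gt (hlv i))
  have heq1 : ∀ᶠ i in atTop, Real.log (ℓseq i) / Real.log (nseq i)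
      / (φ (nseq i) / Real.log (nseq i)) = Real.log (ℓseq i) / φ (nseq i) := by
    filter_upwards [hlu] with i h
    exact div_div_div_same _ _ _ (ne_of_gt h)
  -- the four ε-statements
  have S1 : ∀ ε : ℝ, 0 < ε → ∀ᶠ i in atTop,
      Real.log (ℓseq (i + 1)) / φ (nseq i + 1) < B / δ + ε := by
    intro ε hε
    have h := ev_div_lt hBpos hδ hc hδ' hvb hε
    exact h.mono fun i hi => by rwa [heq2 i] at hi
  have S2 : ∀ ε : ℝ, 0 < ε → ∃ᶠ i in atTop,
      B / δ - ε < Real.log (ℓseq (i + 1)) / φ (nseq i + 1) := by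
    intro ε hε
    have h := freq_div_gt hBpos hδ hc hδ' hvcb hvpos hε
    exact h.mono fun i hi => by rwa [heq2 i] at hi
  have S3 : ∀ ε : ℝ, 0 < ε → ∀ᶠ i in atTop,
      A / γ - ε < Real.log (ℓseq (i + 1)) / φ (nseq (i + 1)) := by
    intro ε hε
    have h := (ev_div_gt hApos hγpos ha' hγ hub hupos hε).and heq1
    have h2 : ∀ᶠ i in atTop, A / γ - ε < Real.log (ℓseq i) / φ (nseq i) :=
      h.mono fun i hi => hi.2 ▸ hi.1
    exact (tendsto_add_atTop_nat 1).eventually h2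
  have S4 : ∀ ε : ℝ, 0 < ε → ∃ᶠ i in atTop,
      Real.log (ℓseq (i + 1)) / φ (nseq (i + 1)) < A / γ + ε := by
    intro ε hε
    have h := (freq_div_lt hApos hγpos ha' hγ hucb hε).and_eventually heq1
    have h2 : ∃ᶠ i in atTop, Real.log (ℓseq i) / φ (nseq i) < A / γ + ε :=
      h.mono fun i hi => hi.2 ▸ hi.1
    exact freq_shift h2
  -- ratio computation
  have hratio : ∀ (n L : ℕ), R m n x = (L : ℕ∞) →
      ratio m φ x n = ENNReal.ofReal (Real.log L / φ n) := by
    intro n L hR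
    have hne : ((L : ℕ∞)) ≠ ⊤ := by simp
    simp only [ratio, elog, hR, if_neg hne, ENat.toNat_coe]
    rw [ENNReal.ofReal_div_of_pos (hpos n)]
  obtain ⟨N₀, hN₀⟩ := eventually_atTop.mp hx
  -- block decomposition
  have hblock : ∀ I : ℕ, ∀ᶠ n in atTop, ∃ i, I ≤ i ∧ nseq i < n ∧ n ≤ nseq (i + 1) ∧
      ratio m φ x n = ENNReal.ofReal (Real.log (ℓseq (i + 1)) / φ n) := by
    intro I
    filter_upwards [eventually_ge_atTop (max N₀ (nseq I + 1))] with n hn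
    have hnN : N₀ ≤ n := le_trans (le_max_left _ _) hn
    have hnI : nseq I < n := lt_of_lt_of_le (Nat.lt_succ_self _)
      (le_trans (le_max_right _ _) hn)
    have hIn : I ≤ n := le_trans hns.le_apply hnI.le
    obtain ⟨i, hiI, hi1, hi2⟩ : ∃ i, I ≤ i ∧ nseq i < n ∧ n ≤ nseq (i + 1) := by
      refine ⟨Nat.findGreatest (fun j => nseq j < n) n,
        Nat.le_findGreatest (P := fun j => nseq j < n) hIn hnI,
        Nat.findGreatest_spec (P := fun j => nseq j < n) hIn hnI, ?_⟩
      by_contra hcon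
      push_neg at hcon
      have hle : Nat.findGreatest (fun j => nseq j < n) n + 1
          ≤ nseq (Nat.findGreatest (fun j => nseq j < n) n + 1) := hns.le_apply
      exact Nat.findGreatest_is_greatest (P := fun j => nseq j < n) (n := n)
        (Nat.lt_succ_self _) (by omega) hcon
    exact ⟨i, hiI, hi1, hi2, hratio n _ (hN₀ n hnN i hi1 hi2)⟩
  -- ofReal adds
  have hof_add : ∀ (r : ℝ) (ε : NNReal), 0 ≤ r →
      ENNReal.ofReal (r + (ε : ℝ)) = ENNReal.ofReal r + (ε : ℝ≥0∞) := by
    intro r ε hr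
    rw [ENNReal.ofReal_add hr ε.coe_nonneg, ENNReal.ofReal_coe_nnreal]
  -- limsup ≤ B/δ
  have hlimsup_le : Filter.limsup (fun n => ratio m φ x n) Filter.atTop
      ≤ ENNReal.ofReal (B / δ) := by
    apply ENNReal.le_of_forall_pos_le_add
    intro ε hε _
    have hεR : (0 : ℝ) < (ε : ℝ) := NNReal.coe_pos.mpr hε
    obtain ⟨I, hI⟩ := eventually_atTop.mp (S1 ε hεR)
    refine limsup_le_of_le (by isBoundedDefault) ?_
    filter_upwards [hblock I] with n hn
    obtain ⟨i, hiI, h1, h2, heq⟩ := hn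
    rw [heq]
    have hb1 : Real.log (ℓseq (i + 1)) / φ n
        ≤ Real.log (ℓseq (i + 1)) / φ (nseq i + 1) := by
      gcongr
      · exact hpos _
      · exact hmono (Nat.succ_le_of_lt h1)
    calc ENNReal.ofReal (Real.log (ℓseq (i + 1)) / φ n)
        ≤ ENNReal.ofReal (B / δ + (ε : ℝ)) :=
          ENNReal.ofReal_le_ofReal (le_trans hb1 (hI i hiI).le)
      _ = ENNReal.ofReal (B / δ) + (ε : ℝ≥0∞) := hof_add _ ε hBDpos.le
  -- limsup ≥ B/δ
  have hten1 : Tendsto (fun i => nseq i + 1) atTop atTop :=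
    tendsto_atTop_mono (fun i => Nat.le_succ_of_le hns.le_apply) tendsto_id
  have hten2 : Tendsto (fun i => nseq (i + 1)) atTop atTop :=
    tendsto_atTop_mono (fun i => le_trans (Nat.le_succ i) hns.le_apply) tendsto_id
  have hthr1 : ∀ᶠ i in atTop, N₀ ≤ nseq i + 1 :=
    hten1.eventually_ge_atTop N₀
  have hthr2 : ∀ᶠ i in atTop, N₀ ≤ nseq (i + 1) :=
    hten2.eventually_ge_atTop N₀
  have hlimsup_ge : ENNReal.ofReal (B / δ)
      ≤ Filter.limsup (fun n => ratio m φ x n) Filter.atTop := by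
    have hk : ∀ k : ℕ, ENNReal.ofReal (B / δ - 1 / ((k : ℝ) + 1))
        ≤ Filter.limsup (fun n => ratio m φ x n) Filter.atTop := by
      intro k
      have hεk : (0 : ℝ) < 1 / ((k : ℝ) + 1) := by positivity
      apply le_limsup_of_frequently_le'
      have hcomb := (S2 _ hεk).and_eventually hthr1
      apply hten1.frequently
      apply hcomb.mono
      rintro i ⟨h1, h2⟩
      have hRn : R m (nseq i + 1) x = (ℓseq (i + 1) : ℕ∞) :=
        hN₀ (nseq i + 1) h2 i (Nat.lt_succ_self _)
          (Nat.succ_le_of_lt (hns (Nat.lt_succ_self i)))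
      rw [hratio _ _ hRn]
      exact ENNReal.ofReal_le_ofReal h1.le
    have htend : Tendsto (fun k : ℕ => ENNReal.ofReal (B / δ - 1 / ((k : ℝ) + 1)))
        atTop (𝓝 (ENNReal.ofReal (B / δ))) := by
      have hreal : Tendsto (fun k : ℕ => B / δ - 1 / ((k : ℝ) + 1)) atTop (𝓝 (B / δ - 0)) :=
        tendsto_const_nhds.sub tendsto_one_div_add_atTop_nhds_zero_nat
      rw [sub_zero] at hreal
      exact (ENNReal.continuous_ofReal.tendsto _).comp hreal
    exact le_of_tendsto htend (Eventually.of_forall hk)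
  -- liminf ≥ A/γ
  have hliminf_ge : ENNReal.ofReal (A / γ)
      ≤ Filter.liminf (fun n => ratio m φ x n) Filter.atTop := by
    have hk : ∀ k : ℕ, ENNReal.ofReal (A / γ - 1 / ((k : ℝ) + 1))
        ≤ Filter.liminf (fun n => ratio m φ x n) Filter.atTop := by
      intro k
      have hεk : (0 : ℝ) < 1 / ((k : ℝ) + 1) := by positivity
      obtain ⟨I, hI⟩ := eventually_atTop.mp (S3 _ hεk)
      refine le_liminf_of_le (by isBoundedDefault) ?_
      filter_upwards [hblock I] with n hn
      obtain ⟨i, hiI, h1, h2, heq⟩ := hn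
      rw [heq]
      apply ENNReal.ofReal_le_ofReal
      have hb2 : Real.log (ℓseq (i + 1)) / φ (nseq (i + 1))
          ≤ Real.log (ℓseq (i + 1)) / φ n := by
        gcongr
        · exact hpos _
        · exact hmono h2
      linarith [hI i hiI]
    have htend : Tendsto (fun k : ℕ => ENNReal.ofReal (A / γ - 1 / ((k : ℝ) + 1)))
        atTop (𝓝 (ENNReal.ofReal (A / γ))) := by
      have hreal : Tendsto (fun k : ℕ => A / γ - 1 / ((k : ℝ) + 1)) atTop (𝓝 (A / γ - 0)) :=
        tendsto_const_nhds.sub tendsto_one_div_add_atTop_nhds_zero_nat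
      rw [sub_zero] at hreal
      exact (ENNReal.continuous_ofReal.tendsto _).comp hreal
    exact le_of_tendsto htend (Eventually.of_forall hk)
  -- liminf ≤ A/γ
  have hliminf_le : Filter.liminf (fun n => ratio m φ x n) Filter.atTop
      ≤ ENNReal.ofReal (A / γ) := by
    apply ENNReal.le_of_forall_pos_le_add
    intro ε hε _
    have hεR : (0 : ℝ) < (ε : ℝ) := NNReal.coe_pos.mpr hε
    rw [← hof_add _ ε hADpos.le]
    apply liminf_le_of_frequently_le'
    have hcomb := (S4 ε hεR).and_eventually hthr2
    apply hten2.frequently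
    apply hcomb.mono
    rintro i ⟨h1, h2⟩
    have hRn : R m (nseq (i + 1)) x = (ℓseq (i + 1) : ℕ∞) :=
      hN₀ (nseq (i + 1)) h2 i (hns (Nat.lt_succ_self i)) le_rfl
    rw [hratio _ _ hRn]
    exact ENNReal.ofReal_le_ofReal h1.le
  exact ⟨le_antisymm hliminf_le hliminf_ge, le_antisymm hlimsup_le hlimsup_ge⟩

end RecurrenceZeroOne
end
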